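/- Let γ : Id ⇒ S be the unit of a monad S on a category B with multiplication μ. Then the ideal Z₁(Θ_γ) = { g : X → Y | ∃ φ : SX → Y with φ ∘ γ_X = g } is closed; indeed it coincides with the class of arrows factoring through an object of the form SB for some object B. -/
import Mathlib


open CategoryTheory

/-- For a monad `S` with unit `γ = S.η`, the ideal
`Z₁(Θ_γ) = {g : X ⟶ Y | ∃ φ : SX ⟶ Y, γ_X ≫ φ = g}` is closed, and it coincides with the class
of arrows factoring through an object of the form `S B'`. -/
theorem stmt11 {B : Type*} [Category B] (S : Monad B) :
    (∀ {X Y : B} (g : X ⟶ Y), (∃ φ : S.obj X ⟶ Y, S.η.app X ≫ φ = g) →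
      ∃ (N : B), (∃ ψ : S.obj N ⟶ N, S.η.app N ≫ ψ = 𝟙 N) ∧
        ∃ (a : X ⟶ N) (b : N ⟶ Y), a ≫ b = g) ∧
    (∀ {X Y : B} (g : X ⟶ Y),
      (∃ φ : S.obj X ⟶ Y, S.η.app X ≫ φ = g) ↔
      ∃ (Z : B) (a : X ⟶ S.obj Z) (b : S.obj Z ⟶ Y), a ≫ b = g) := by
  constructor
  · rintro X Y g ⟨φ, hφ⟩
    exact ⟨S.obj X, ⟨S.μ.app X, S.left_unit X⟩, S.η.app X, φ, hφ⟩
  · intro X Y g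
    constructor
    · rintro ⟨φ, hφ⟩
      exact ⟨X, S.η.app X, φ, hφ⟩
    · rintro ⟨Z, a, b, hab⟩
      refine ⟨S.map a ≫ S.μ.app Z ≫ b, ?_⟩
      have := S.η.naturality a
      simp only [Functor.id_obj, Functor.id_map] at this
      rw [← Category.assoc, ← this, Category.assoc, ← Category.assoc (S.η.app (S.obj Z)),
        S.left_unit, Category.id_comp, hab]
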